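/- Let X be a set and Δ : X × X → ℝ with Δ(x,y) = f(x) − f(y) for some f : X → ℝ. Suppose a sequence of pairs (x_t, y_t), t = 0,1,2,..., satisfies: for all t ≥ 0, either y_{t+1} = x_t, or (y_{t+1} = y_t and Δ(x_t, y_t) ≤ 0). Then for every T ≥ 0, the partial sum ∑_{t=0}^T Δ(x_t, y_t) ≤ f(x_T) − f(y_0) = Δ(x_T, y_0). -/

import Mathlib

/-- Telescoping bound: if `Δ(x,y) = f(x) - f(y)` and the imitator either copies
(`y_{t+1} = x t`) or stays with `y_{t+1} = y t` while `Δ(x_t, y_t) ≤ 0`, then the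
cumulative relative payoff of the opponent is bounded by `f(x_T) - f(y_0)`. -/
theorem imitation_telescoping_bound {X : Type*} (f : X → ℝ)
    (Δ : X → X → ℝ) (hΔ : ∀ x y, Δ x y = f x - f y)
    (x y : ℕ → X)
    (hrule : ∀ t, y (t + 1) = x t ∨ (y (t + 1) = y t ∧ Δ (x t) (y t) ≤ 0)) :
    ∀ T, ∑ t ∈ Finset.range (T + 1), Δ (x t) (y t) ≤ f (x T) - f (y 0) ∧
      f (x T) - f (y 0) = Δ (x T) (y 0) := by
  intro T
  refine ⟨?_, (hΔ _ _).symm⟩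
  induction T with
  | zero => simp [hΔ]
  | succ T ih =>
    rw [Finset.sum_range_succ]
    rcases hrule T with h | ⟨h1, h2⟩
    · rw [h, hΔ]; linarith
    · rw [h1, hΔ]
      rw [hΔ] at h2
      linarith
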